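/- arXiv:2203.05694 — 3 statements merged into one kernel-verified Lean document; each statement's English description precedes it below -/
import Mathlib

section
/- Let λ > 0, Γ > 0, Y₀ > 0 be real numbers, let c₂ be a nonzero real number and let δ₀ > 0. Define y(s)² := Y₀²·(1 + (Γ/λ)·Y₀²·s)^{-1} and Λ(s) := (2c₂λ/Γ)·log(1 + (Γ/λ)·Y₀²·s) for s ≥ 0. Then for every t > 0 and every μ ∈ ℝ with |μ|·t ≤ δ₀ one has |∫₀ᵗ e^{isμ} · e^{iΛ(s)} · y(s)² ds − (1/(2ic₂))·(e^{iΛ(t)} − 1)| ≤ δ₀/|c₂|. -/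
open MeasureTheory Real

lemma my_norm_exp_mul_I_sub_one_le (x : ℝ) :
    ‖Complex.exp ((x : ℂ) * Complex.I) - 1‖ ≤ |x| := by
  have h1 : ‖Complex.exp ((x : ℂ) * Complex.I) - 1‖ ^ 2 = 2 - 2 * Real.cos x := by
    rw [Complex.sq_norm, Complex.exp_mul_I, Complex.normSq_apply]
    simp [Complex.add_re, Complex.add_im, Complex.mul_re, Complex.mul_im,
      Complex.cos_ofReal_re, Complex.sin_ofReal_re]
    nlinarith [Real.sin_sq_add_cos_sq x]
  have h2 : 2 - 2 * Real.cos x ≤ x ^ 2 := by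
    have hs : Real.sin (x / 2) ^ 2 ≤ (x / 2) ^ 2 := Real.sin_sq_le_sq
    have h2x : Real.cos (2 * (x / 2)) = Real.cos (x / 2) ^ 2 - Real.sin (x / 2) ^ 2 :=
      Real.cos_two_mul' _
    have hp := Real.sin_sq_add_cos_sq (x / 2)
    rw [show 2 * (x / 2) = x by ring] at h2x
    nlinarith
  nlinarith [norm_nonneg (Complex.exp ((x : ℂ) * Complex.I) - 1), abs_nonneg x, sq_abs x]

/-- For `λ, Γ, Y₀ > 0`, `c₂ ≠ 0`, `δ₀ > 0`, with
`y(s)² = Y₀²(1 + (Γ/λ)Y₀²s)⁻¹` and `Λ(s) = (2c₂λ/Γ)·log(1 + (Γ/λ)Y₀²s)`,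
for every `t > 0` and `μ` with `|μ|·t ≤ δ₀`,
`|∫₀ᵗ e^{isμ} e^{iΛ(s)} y(s)² ds − (1/(2ic₂))(e^{iΛ(t)} − 1)| ≤ δ₀/|c₂|`. -/
theorem stmt_1 (lam Γ Y₀ : ℝ) (hlam : 0 < lam) (hΓ : 0 < Γ) (hY₀ : 0 < Y₀)
    (c₂ : ℝ) (hc₂ : c₂ ≠ 0) (δ₀ : ℝ) (hδ₀ : 0 < δ₀) :
    ∀ t : ℝ, 0 < t → ∀ μ : ℝ, |μ| * t ≤ δ₀ →
      ‖(∫ s in (0:ℝ)..t,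
            Complex.exp (Complex.I * s * μ) *
              Complex.exp (Complex.I *
                ((2 * c₂ * lam / Γ) * Real.log (1 + (Γ / lam) * Y₀ ^ 2 * s))) *
              ((Y₀ ^ 2 * (1 + (Γ / lam) * Y₀ ^ 2 * s)⁻¹ : ℝ) : ℂ))
          - (1 / (2 * Complex.I * c₂)) *
              (Complex.exp (Complex.I *
                  ((2 * c₂ * lam / Γ) * Real.log (1 + (Γ / lam) * Y₀ ^ 2 * t))) - 1)‖
        ≤ δ₀ / |c₂| := by
  intro t ht μ hμ
  set a : ℝ := (Γ / lam) * Y₀ ^ 2 with ha_def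
  have ha : 0 < a := by positivity
  set k : ℝ := 2 * c₂ * lam / Γ with hk_def
  set C : ℂ := 1 / (2 * Complex.I * c₂) with hC_def
  set u : ℝ → ℂ := fun s => Complex.exp (Complex.I * s * μ) with hu_def
  set u' : ℝ → ℂ := fun s => Complex.exp (Complex.I * s * μ) * (Complex.I * μ) with hu'_def
  set v : ℝ → ℂ := fun s => C * Complex.exp (Complex.I * ((k * Real.log (1 + a * s) : ℝ) : ℂ))
    with hv_def
  set v' : ℝ → ℂ := fun s =>
    Complex.exp (Complex.I * ((k * Real.log (1 + a * s) : ℝ) : ℂ)) *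
      ((Y₀ ^ 2 * (1 + a * s)⁻¹ : ℝ) : ℂ) with hv'_def
  have huIcc : Set.uIcc (0:ℝ) t = Set.Icc 0 t := Set.uIcc_of_le ht.le
  have hpos : ∀ s ∈ Set.uIcc (0:ℝ) t, 0 < 1 + a * s := by
    intro s hs
    rw [huIcc] at hs
    nlinarith [hs.1]
  have hc₂' : (c₂ : ℂ) ≠ 0 := Complex.ofReal_ne_zero.mpr hc₂
  -- derivative of u
  have hu : ∀ s ∈ Set.uIcc (0:ℝ) t, HasDerivAt u (u' s) s := by
    intro s _
    have h1 : HasDerivAt (fun s : ℝ => (s : ℂ)) 1 s := Complex.ofRealCLM.hasDerivAt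
    have h2 : HasDerivAt (fun s : ℝ => Complex.I * (s : ℂ) * μ) (Complex.I * μ) s := by
      simpa using (h1.const_mul Complex.I).mul_const (μ : ℂ)
    simpa [hu_def, hu'_def] using h2.cexp
  -- derivative of v
  have hv : ∀ s ∈ Set.uIcc (0:ℝ) t, HasDerivAt v (v' s) s := by
    intro s hs
    have hps := hpos s hs
    have hlog : HasDerivAt (fun s : ℝ => Real.log (1 + a * s)) (a / (1 + a * s)) s := by
      have hin : HasDerivAt (fun s : ℝ => 1 + a * s) a s := by
        simpa using ((hasDerivAt_id s).const_mul a).const_add (1:ℝ)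
      simpa using hin.log hps.ne'
    have hk' : HasDerivAt (fun s : ℝ => k * Real.log (1 + a * s)) (k * (a / (1 + a * s))) s :=
      hlog.const_mul k
    have hcc : HasDerivAt (fun s : ℝ => ((k * Real.log (1 + a * s) : ℝ) : ℂ))
        ((k * (a / (1 + a * s)) : ℝ) : ℂ) s := hk'.ofReal_comp
    have hexp := ((hcc.const_mul Complex.I).cexp).const_mul C
    refine hexp.congr_deriv ?_
    symm
    rw [hv'_def]
    have hka : k * a = 2 * c₂ * Y₀ ^ 2 := by
      rw [hk_def, ha_def]
      field_simp
    have hreal : k * (a / (1 + a * s)) = 2 * c₂ * (Y₀ ^ 2 * (1 + a * s)⁻¹) := by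
      rw [div_eq_mul_inv, ← mul_assoc, hka]
      ring
    have hcast : ((2 * c₂ * (Y₀ ^ 2 * (1 + a * s)⁻¹) : ℝ) : ℂ)
        = 2 * (c₂:ℂ) * ((Y₀ ^ 2 * (1 + a * s)⁻¹ : ℝ) : ℂ) := by push_cast; ring
    have key : ∀ E w : ℂ, E * w = C * (E * (Complex.I * (2 * (c₂:ℂ) * w))) := by
      intro E w
      rw [hC_def]
      have h2 : (2 * Complex.I * (c₂:ℂ)) ≠ 0 := by
        simp [Complex.I_ne_zero, hc₂']
      field_simp
    rw [hreal, hcast]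
    exact key _ _
  -- integrability
  have hcont_u' : Continuous u' := by
    rw [hu'_def]
    exact (Complex.continuous_exp.comp
      ((continuous_const.mul Complex.continuous_ofReal).mul continuous_const)).mul
      continuous_const
  have hint_u' : IntervalIntegrable u' volume 0 t := hcont_u'.intervalIntegrable 0 t
  have hbase : ContinuousOn (fun s : ℝ => 1 + a * s) (Set.uIcc (0:ℝ) t) :=
    (continuous_const.add (continuous_const.mul continuous_id)).continuousOn
  have hlogc : ContinuousOn (fun s : ℝ => Real.log (1 + a * s)) (Set.uIcc (0:ℝ) t) :=
    hbase.log fun s hs => (hpos s hs).ne'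
  have hcont_v' : ContinuousOn v' (Set.uIcc (0:ℝ) t) := by
    rw [hv'_def]
    apply ContinuousOn.mul
    · exact Complex.continuous_exp.comp_continuousOn
        (continuousOn_const.mul (Complex.continuous_ofReal.comp_continuousOn
          (continuousOn_const.mul hlogc)))
    · exact Complex.continuous_ofReal.comp_continuousOn
        (continuousOn_const.mul (hbase.inv₀ fun s hs => (hpos s hs).ne'))
  have hint_v' : IntervalIntegrable v' volume 0 t := hcont_v'.intervalIntegrable
  -- integrand identification
  have hinteg : ∀ s : ℝ,
      Complex.exp (Complex.I * s * μ) *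
        Complex.exp (Complex.I * ((2 * (c₂:ℂ) * lam / Γ) * (Real.log (1 + a * s) : ℂ))) *
        ((Y₀ ^ 2 * (1 + a * s)⁻¹ : ℝ) : ℂ) = u s * v' s := by
    intro s
    have harg : Complex.I * ((2 * (c₂:ℂ) * lam / Γ) * (Real.log (1 + a * s) : ℂ))
        = Complex.I * ((k * Real.log (1 + a * s) : ℝ) : ℂ) := by
      rw [hk_def]; push_cast; ring
    rw [harg, hu_def, hv'_def, mul_assoc]
  -- integration by parts
  have hIBP := intervalIntegral.integral_mul_deriv_eq_deriv_mul hu hv hint_u' hint_v'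
  have hv0 : v 0 = C := by simp [hv_def]
  have hu0 : u 0 = 1 := by simp [hu_def]
  have hargt : Complex.I * ((2 * (c₂:ℂ) * lam / Γ) * (Real.log (1 + a * t) : ℂ))
      = Complex.I * ((k * Real.log (1 + a * t) : ℝ) : ℂ) := by
    rw [hk_def]; push_cast; ring
  have heq : (∫ s in (0:ℝ)..t,
        Complex.exp (Complex.I * s * μ) *
          Complex.exp (Complex.I * ((2 * (c₂:ℂ) * lam / Γ) * (Real.log (1 + a * s) : ℂ))) *
          ((Y₀ ^ 2 * (1 + a * s)⁻¹ : ℝ) : ℂ))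
      - C * (Complex.exp (Complex.I *
          ((2 * (c₂:ℂ) * lam / Γ) * (Real.log (1 + a * t) : ℂ))) - 1)
      = (u t - 1) * v t - ∫ s in (0:ℝ)..t, u' s * v s := by
    rw [intervalIntegral.integral_congr (g := fun s => u s * v' s) (fun s _ => hinteg s)]
    rw [hIBP, hu0, hv0, hargt]
    simp only [hv_def]
    ring
  rw [heq]
  -- norm bounds
  have hnormC : ‖C‖ = 1 / (2 * |c₂|) := by
    rw [hC_def]
    simp [norm_div, norm_mul, Complex.norm_I, Complex.norm_real,
      Complex.norm_two]
  have hexp1 : ∀ x : ℝ, ‖Complex.exp (Complex.I * (x:ℂ))‖ = 1 := fun x => by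
    rw [mul_comm, Complex.norm_exp_ofReal_mul_I]
  have hvt : ‖v t‖ = ‖C‖ := by
    simp only [hv_def, norm_mul]
    rw [hexp1, mul_one]
  have hut : ‖u t - 1‖ ≤ |μ| * t := by
    show ‖Complex.exp (Complex.I * (t:ℂ) * μ) - 1‖ ≤ |μ| * t
    rw [show Complex.I * (t:ℂ) * μ = ((t * μ : ℝ) : ℂ) * Complex.I by push_cast; ring]
    calc ‖Complex.exp (((t * μ : ℝ) : ℂ) * Complex.I) - 1‖ ≤ |t * μ| :=
          my_norm_exp_mul_I_sub_one_le _
      _ = |μ| * t := by rw [abs_mul, abs_of_pos ht]; ring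
  have hintbd : ‖∫ s in (0:ℝ)..t, u' s * v s‖ ≤ |μ| * ‖C‖ * |t - 0| := by
    apply intervalIntegral.norm_integral_le_of_norm_le_const
    intro s _
    have e1 : ‖Complex.exp (Complex.I * (s:ℂ) * μ)‖ = 1 := by
      rw [show Complex.I * (s:ℂ) * μ = Complex.I * ((s * μ : ℝ) : ℂ) by push_cast; ring]
      exact hexp1 _
    have e2 : ‖Complex.exp (Complex.I * ((k * Real.log (1 + a * s) : ℝ) : ℂ))‖ = 1 :=
      hexp1 _
    simp only [hu'_def, hv_def, norm_mul, e1, e2, Complex.norm_I,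
      Complex.norm_real, Real.norm_eq_abs]
    apply le_of_eq
    ring
  calc ‖(u t - 1) * v t - ∫ s in (0:ℝ)..t, u' s * v s‖
      ≤ ‖(u t - 1) * v t‖ + ‖∫ s in (0:ℝ)..t, u' s * v s‖ := norm_sub_le _ _
    _ ≤ |μ| * t * ‖C‖ + |μ| * ‖C‖ * |t - 0| := by
        rw [norm_mul, hvt]
        gcongr
    _ = |μ| * t / |c₂| := by
        rw [hnormC, abs_of_pos (by linarith : (0:ℝ) < t - 0)]
        field_simp
        ring
    _ ≤ δ₀ / |c₂| := (div_le_div_iff_of_pos_right (abs_pos.mpr hc₂)).mpr hμ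
end

section
/- Let k ∈ ℤ and let g : ℝ → ℂ be a C³ function supported in {ρ ∈ ℝ : 2^{k−1} ≤ |ρ| ≤ 2^{k+1}} satisfying |g^{(β)}(ρ)| ≤ 1 + (|ρ|/⟨ρ⟩)^{1−β} for all 0 ≤ β ≤ 3. Then there is an absolute constant C such that for all x ∈ ℝ: |∫_ℝ e^{i x ρ} g(ρ) dρ| ≤ C · 2^k · (1 + |x|)^{−1} · (1 + (2^k/⟨2^k⟩)|x|)^{−2}; consequently ∫_ℝ |∫_ℝ e^{i x ρ} g(ρ) dρ| dx ≤ C · ⟨2^k⟩. -/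
open MeasureTheory Real
open FourierTransform

-- bound on integral of norm for a function supported in |ρ| ≤ R with norm ≤ M there
lemma aux_int_norm_le {h : ℝ → ℂ} {R M : ℝ} (hR : 0 ≤ R) (hM : 0 ≤ M)
    (hbd : ∀ ρ, h ρ ≠ 0 → |ρ| ≤ R ∧ ‖h ρ‖ ≤ M) :
    ∫ ρ, ‖h ρ‖ ≤ 2 * R * M := by
  have hint : Integrable (Set.indicator (Set.Icc (-R) R) (fun _ : ℝ => M)) := by
    rw [integrable_indicator_iff measurableSet_Icc]
    exact integrableOn_const (by simp [Real.volume_Icc])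
  have hle : ∀ ρ, ‖h ρ‖ ≤ Set.indicator (Set.Icc (-R) R) (fun _ : ℝ => M) ρ := by
    intro ρ
    by_cases hρ : h ρ = 0
    · simp [hρ]
      exact Set.indicator_nonneg (fun _ _ => hM) ρ
    · obtain ⟨h1, h2⟩ := hbd ρ hρ
      rw [Set.indicator_of_mem (by rw [Set.mem_Icc]; constructor <;> [linarith [neg_abs_le ρ]; linarith [le_abs_self ρ]])]
      exact h2
  calc ∫ ρ, ‖h ρ‖ ≤ ∫ ρ, Set.indicator (Set.Icc (-R) R) (fun _ : ℝ => M) ρ :=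
        integral_mono_of_nonneg (Filter.Eventually.of_forall fun ρ => norm_nonneg _) hint
          (Filter.Eventually.of_forall hle)
    _ ≤ 2 * R * M := by
        rw [integral_indicator_const _ measurableSet_Icc]
        simp [Real.volume_Icc, smul_eq_mul]
        rw [max_eq_left (by linarith)]
        nlinarith

-- norm of Fourier integral bounded by L¹ norm
lemma aux_norm_FT_le (h : ℝ → ℂ) (w : ℝ) : ‖𝓕 h w‖ ≤ ∫ ρ, ‖h ρ‖ := by
  rw [Real.fourier_eq']
  refine (norm_integral_le_integral_norm _).trans (le_of_eq ?_)
  congr 1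
  funext v
  rw [smul_eq_mul, norm_mul, Complex.norm_exp_ofReal_mul_I, one_mul]

set_option maxHeartbeats 1000000 in
/-- One-dimensional oscillatory integral estimate: if `g` is `C³`,
supported in `{2^{k−1} ≤ |ρ| ≤ 2^{k+1}}`, with `|g^{(β)}(ρ)| ≤ 1 + (|ρ|/⟨ρ⟩)^{1−β}`
for `β ≤ 3`, then `|∫ e^{ixρ} g(ρ) dρ| ≤ C·2^k(1+|x|)^{−1}(1+(2^k/⟨2^k⟩)|x|)^{−2}`
and consequently the `L¹_x` norm of this Fourier transform is at most `C·⟨2^k⟩`,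
with `C` absolute. -/
theorem stmt_5 :
    ∃ C : ℝ, 0 < C ∧
      ∀ (k : ℤ) (g : ℝ → ℂ),
        ContDiff ℝ 3 g →
        (∀ ρ : ℝ, g ρ ≠ 0 → (2:ℝ) ^ (k - 1) ≤ |ρ| ∧ |ρ| ≤ (2:ℝ) ^ (k + 1)) →
        (∀ β : ℕ, β ≤ 3 → ∀ ρ : ℝ,
          ‖iteratedDeriv β g ρ‖ ≤ 1 + (|ρ| / Real.sqrt (1 + ρ ^ 2)) ^ (1 - (β:ℤ))) →
        (∀ x : ℝ,
          ‖∫ ρ : ℝ, Complex.exp (Complex.I * x * ρ) * g ρ‖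
            ≤ C * (2:ℝ) ^ k * (1 + |x|)⁻¹ *
                ((1 + ((2:ℝ) ^ k / Real.sqrt (1 + ((2:ℝ) ^ k) ^ 2)) * |x|) ^ 2)⁻¹)
        ∧ (∫ x : ℝ, ‖∫ ρ : ℝ, Complex.exp (Complex.I * x * ρ) * g ρ‖)
            ≤ C * Real.sqrt (1 + ((2:ℝ) ^ k) ^ 2) := by
  refine ⟨1000, by norm_num, ?_⟩
  intro k g hg hsupp hder
  set q : ℝ := (2:ℝ) ^ k with hq_def
  have hq : 0 < q := by positivity
  set s : ℝ := Real.sqrt (1 + q ^ 2) with hs_def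
  have hs2 : s ^ 2 = 1 + q ^ 2 := Real.sq_sqrt (by positivity)
  have hs0 : 0 < s := Real.sqrt_pos.2 (by positivity)
  have hqs : q ≤ s := by
    nlinarith [hs2, hs0]
  set lam : ℝ := q / s with hlam_def
  have hlam0 : 0 < lam := div_pos hq hs0
  have hlam1 : lam ≤ 1 := (div_le_one hs0).2 hqs
  set R : ℝ := (2:ℝ) ^ (k + 1) with hR_def
  have hRq : R = 2 * q := by rw [hR_def, hq_def, zpow_add_one₀ (by norm_num)]; ring
  have hR0 : 0 ≤ R := by positivity
  have hlow : (2:ℝ) ^ (k - 1) = q / 2 := by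
    rw [hq_def, zpow_sub_one₀ (by norm_num)]; ring
  -- support of derivatives
  set S : Set ℝ := abs ⁻¹' Set.Icc ((2:ℝ) ^ (k - 1)) R with hS_def
  have hSclosed : IsClosed S := isClosed_Icc.preimage continuous_abs
  have hsuppn : ∀ n : ℕ, Function.support (iteratedDeriv n g) ⊆ S := by
    intro n
    induction n with
    | zero =>
      intro ρ hρ
      simp only [iteratedDeriv_zero, Function.mem_support] at hρ
      exact (hsupp ρ hρ)
    | succ n ih =>
      rw [iteratedDeriv_succ]
      refine (support_deriv_subset).trans ?_
      exact closure_minimal ih hSclosed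
  have hScs : ∀ ρ ∈ S, |ρ| ≤ R := fun ρ hρ => (Set.mem_Icc.1 hρ).2
  have hSlow : ∀ ρ ∈ S, q / 2 ≤ |ρ| := fun ρ hρ => hlow ▸ (Set.mem_Icc.1 hρ).1
  have hcs : ∀ n : ℕ, HasCompactSupport (iteratedDeriv n g) := by
    intro n
    have h1 : Function.support (iteratedDeriv n g) ⊆ Set.Icc (-R) R := by
      intro ρ hρ
      have := hScs ρ (hsuppn n hρ)
      rw [Set.mem_Icc]
      constructor <;> [linarith [neg_abs_le ρ]; linarith [le_abs_self ρ]]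
    exact IsCompact.of_isClosed_subset isCompact_Icc isClosed_closure
      (closure_minimal h1 isClosed_Icc)
  have hint : ∀ n : ℕ, (n : ℕ∞) ≤ 3 → Integrable (iteratedDeriv n g) := by
    intro n hn
    have hn' : (n : ℕ) ≤ 3 := by exact_mod_cast hn
    exact (hg.continuous_iteratedDeriv n (by exact_mod_cast hn')).integrable_of_hasCompactSupport
      (hcs n)
  -- pointwise derivative bounds
  have hd1 : ∀ ρ : ℝ, |ρ| / Real.sqrt (1 + ρ ^ 2) ≤ 1 := by
    intro ρ
    rw [div_le_one (Real.sqrt_pos.2 (by positivity))]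
    calc |ρ| = Real.sqrt (ρ ^ 2) := (Real.sqrt_sq_eq_abs ρ).symm
      _ ≤ Real.sqrt (1 + ρ ^ 2) := Real.sqrt_le_sqrt (by linarith)
  have hd0 : ∀ ρ : ℝ, 0 ≤ |ρ| / Real.sqrt (1 + ρ ^ 2) := fun ρ => by positivity
  have hb0 : ∀ ρ, ‖g ρ‖ ≤ 2 := by
    intro ρ
    have := hder 0 (by norm_num) ρ
    simp only [iteratedDeriv_zero, Nat.cast_zero, sub_zero, zpow_one] at this
    linarith [hd1 ρ]
  have hb1 : ∀ ρ, ‖iteratedDeriv 1 g ρ‖ ≤ 2 := by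
    intro ρ
    have := hder 1 (by norm_num) ρ
    simp only [Nat.cast_one, sub_self, zpow_zero] at this
    linarith
  have hb3 : ∀ ρ ∈ S, ‖iteratedDeriv 3 g ρ‖ ≤ 5 * (s ^ 2 / q ^ 2) := by
    intro ρ hρ
    have hρ2 : q / 2 ≤ |ρ| := hSlow ρ hρ
    have hρpos : 0 < |ρ| := lt_of_lt_of_le (by positivity) hρ2
    have hu : (0:ℝ) < ρ ^ 2 := by rw [← sq_abs]; exact pow_pos hρpos 2
    have := hder 3 (by norm_num) ρ
    have hexp : (1 - ((3:ℕ):ℤ)) = (-2 : ℤ) := by norm_num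
    rw [hexp] at this
    have hsq : Real.sqrt (1 + ρ ^ 2) ^ 2 = 1 + ρ ^ 2 := Real.sq_sqrt (by positivity)
    have hzp : (|ρ| / Real.sqrt (1 + ρ ^ 2)) ^ (-2 : ℤ) = (1 + ρ ^ 2) / ρ ^ 2 := by
      rw [zpow_neg, show ((2:ℤ) = ((2:ℕ):ℤ)) by norm_num, zpow_natCast, div_pow, hsq,
        sq_abs, inv_div]
    rw [hzp] at this
    have h2 : (1 + ρ ^ 2) / ρ ^ 2 = 1 + 1 / ρ ^ 2 := by rw [add_div, div_self hu.ne']; ring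
    have h3 : 1 / ρ ^ 2 ≤ 4 / q ^ 2 := by
      rw [div_le_div_iff₀ hu (pow_pos hq 2)]
      nlinarith [sq_abs ρ]
    have h4 : 5 * (s ^ 2 / q ^ 2) = 5 / q ^ 2 + 5 := by
      rw [hs2]; field_simp
    have h5 : 4 / q ^ 2 ≤ 5 / q ^ 2 := by
      gcongr
      norm_num
    rw [h2] at this
    linarith
  -- L¹ bounds for the derivatives
  have hA0 : ∫ ρ, ‖g ρ‖ ≤ 8 * q := by
    have h := aux_int_norm_le hR0 (by norm_num : (0:ℝ) ≤ 2)
      (fun ρ hρ => ⟨(hsupp ρ hρ).2, hb0 ρ⟩)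
    rw [hRq] at h; linarith
  have hA1 : ∫ ρ, ‖iteratedDeriv 1 g ρ‖ ≤ 8 * q := by
    have h := aux_int_norm_le hR0 (by norm_num : (0:ℝ) ≤ 2)
      (fun ρ hρ => ⟨hScs ρ (hsuppn 1 hρ), hb1 ρ⟩)
    rw [hRq] at h; linarith
  have hA3 : ∫ ρ, ‖iteratedDeriv 3 g ρ‖ ≤ 20 * (s ^ 2 / q) := by
    have hM : (0:ℝ) ≤ 5 * (s ^ 2 / q ^ 2) := by positivity
    have h := aux_int_norm_le hR0 hM
      (fun ρ hρ => ⟨hScs ρ (hsuppn 3 hρ), hb3 ρ (hsuppn 3 hρ)⟩)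
    have heq : 2 * R * (5 * (s ^ 2 / q ^ 2)) = 20 * (s ^ 2 / q) := by
      rw [hRq]; field_simp; ring
    linarith [heq ▸ h]
  -- relation to the Fourier transform
  have hFeq : ∀ x : ℝ, (∫ ρ : ℝ, Complex.exp (Complex.I * x * ρ) * g ρ)
      = 𝓕 g (-x / (2 * π)) := by
    intro x
    rw [Real.fourier_eq']
    congr 1
    funext v
    rw [smul_eq_mul]
    congr 2
    have hπ : (π : ℝ) ≠ 0 := pi_ne_zero
    have h1 : (inner ℝ v (-x / (2 * π)) : ℝ) = v * (-x / (2 * π)) := by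
      simp [RCLike.inner_apply, conj_trivial]; ring
    rw [h1]
    have h2 : -2 * π * (v * (-x / (2 * π))) = v * x := by field_simp
    rw [h2]
    push_cast
    ring
  have hg' : ContDiff ℝ ((3 : ℕ∞) : WithTop ℕ∞) g := by exact_mod_cast hg
  have hkey : ∀ n : ℕ, (n : ℕ∞) ≤ 3 → ∀ x : ℝ,
      |x| ^ n * ‖∫ ρ : ℝ, Complex.exp (Complex.I * x * ρ) * g ρ‖
        ≤ ∫ ρ, ‖iteratedDeriv n g ρ‖ := by
    intro n hn x
    rw [hFeq x]
    set w : ℝ := -x / (2 * π) with hw_def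
    have heq := congrFun (Real.fourier_iteratedDeriv (N := 3) hg' hint hn) w
    have habsw : |w| = |x| / (2 * π) := by
      rw [hw_def, abs_div, abs_neg, abs_of_pos (by positivity : (0:ℝ) < 2 * π)]
    have hnormc : ‖(2 * (π:ℂ) * Complex.I * (w:ℂ))‖ = |x| := by
      simp only [norm_mul, Complex.norm_I, Complex.norm_real, Real.norm_eq_abs,
        Complex.norm_ofNat, mul_one]
      rw [habsw, abs_of_pos pi_pos]
      field_simp
    calc |x| ^ n * ‖𝓕 g w‖ = ‖(2 * (π:ℂ) * Complex.I * (w:ℂ)) ^ n • 𝓕 g w‖ := by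
          rw [norm_smul, norm_pow, hnormc]
      _ = ‖𝓕 (iteratedDeriv n g) w‖ := by rw [heq]
      _ ≤ ∫ ρ, ‖iteratedDeriv n g ρ‖ := aux_norm_FT_le _ _
  -- pointwise estimate with constant 160
  have hpt : ∀ x : ℝ, ‖∫ ρ : ℝ, Complex.exp (Complex.I * x * ρ) * g ρ‖
      ≤ 160 * q * (1 + |x|)⁻¹ * ((1 + lam * |x|) ^ 2)⁻¹ := by
    intro x
    set Fx := ‖∫ ρ : ℝ, Complex.exp (Complex.I * x * ρ) * g ρ‖ with hFx_def
    set t := |x| with ht_def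
    have ht : 0 ≤ t := abs_nonneg x
    have hFnn : 0 ≤ Fx := norm_nonneg _
    have e0 : Fx ≤ 8 * q := by
      have h := (hkey 0 (by norm_num) x).trans hA0
      simpa using h
    have e1 : t * Fx ≤ 8 * q := by
      have h := (hkey 1 (by norm_num) x).trans hA1
      simpa using h
    have e3 : t ^ 3 * Fx ≤ 20 * (s ^ 2 / q) := (hkey 3 le_rfl x).trans hA3
    have hden1 : (0:ℝ) < 1 + t := by linarith
    have hlt : (0:ℝ) < 1 + lam * t := by nlinarith
    have hden2 : (0:ℝ) < (1 + lam * t) ^ 2 := pow_pos hlt 2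
    have hpoly : (1 + t) * (1 + lam * t) ^ 2 ≤ 1 + 6 * t + 4 * lam ^ 2 * t ^ 3 := by
      have k1 : lam * t ≤ t := by nlinarith
      have k2 : lam ^ 2 * t ^ 2 ≤ t + lam ^ 2 * t ^ 3 := by
        nlinarith [mul_nonneg (mul_nonneg (sq_nonneg lam) ht) (sq_nonneg (t - 1)),
          mul_nonneg (sub_nonneg.2 (by nlinarith : lam ^ 2 ≤ 1)) ht]
      have k3 : lam * t ^ 2 ≤ t + lam ^ 2 * t ^ 3 := by
        nlinarith [mul_nonneg ht (sq_nonneg (lam * t - 1))]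
      nlinarith [k1, k2, k3, mul_nonneg hlam0.le ht]
    have c4 : lam ^ 2 * (20 * (s ^ 2 / q)) = 20 * q := by
      rw [hlam_def]; field_simp
    have hmain : Fx * ((1 + t) * (1 + lam * t) ^ 2) ≤ 160 * q := by
      have c1 : Fx * ((1 + t) * (1 + lam * t) ^ 2)
          ≤ Fx * (1 + 6 * t + 4 * lam ^ 2 * t ^ 3) :=
        mul_le_mul_of_nonneg_left hpoly hFnn
      have c2 : Fx * (1 + 6 * t + 4 * lam ^ 2 * t ^ 3)
          = Fx + 6 * (t * Fx) + 4 * (lam ^ 2 * (t ^ 3 * Fx)) := by ring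
      have c3 : lam ^ 2 * (t ^ 3 * Fx) ≤ lam ^ 2 * (20 * (s ^ 2 / q)) :=
        mul_le_mul_of_nonneg_left e3 (sq_nonneg lam)
      rw [c4] at c3
      linarith
    have hdiv : Fx ≤ 160 * q / ((1 + t) * (1 + lam * t) ^ 2) :=
      (le_div_iff₀ (by positivity)).2 hmain
    calc Fx ≤ 160 * q / ((1 + t) * (1 + lam * t) ^ 2) := hdiv
      _ = 160 * q * (1 + t)⁻¹ * ((1 + lam * t) ^ 2)⁻¹ := by
          rw [div_eq_mul_inv, mul_inv]; ring
  constructor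
  · intro x
    refine (hpt x).trans ?_
    have h1 : (0:ℝ) ≤ (1 + |x|)⁻¹ := by positivity
    have h2 : (0:ℝ) ≤ ((1 + lam * |x|) ^ 2)⁻¹ := by positivity
    have : (160:ℝ) * q ≤ 1000 * q := by linarith
    exact mul_le_mul_of_nonneg_right (mul_le_mul_of_nonneg_right this h1) h2
  · -- L¹ estimate
    set χ : ℝ → ℝ := fun x => 160 * q * (1 + (lam * x) ^ 2)⁻¹ with hχ_def
    have hχint : Integrable χ :=
      (integrable_inv_one_add_sq.comp_mul_left' hlam0.ne').const_mul (160 * q)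
    have hle : ∀ x : ℝ, ‖∫ ρ : ℝ, Complex.exp (Complex.I * x * ρ) * g ρ‖ ≤ χ x := by
      intro x
      refine (hpt x).trans ?_
      have hA : (1 + |x|)⁻¹ ≤ 1 := by
        rw [inv_le_one_iff₀]; right; linarith [abs_nonneg x]
      have hBle : 1 + (lam * x) ^ 2 ≤ (1 + lam * |x|) ^ 2 := by
        have h1 : (lam * x) ^ 2 = (lam * |x|) ^ 2 := by
          rw [mul_pow, mul_pow, sq_abs]
        nlinarith [mul_nonneg hlam0.le (abs_nonneg x)]
      have hB : ((1 + lam * |x|) ^ 2)⁻¹ ≤ (1 + (lam * x) ^ 2)⁻¹ := by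
        apply inv_anti₀ (by positivity) hBle
      calc 160 * q * (1 + |x|)⁻¹ * ((1 + lam * |x|) ^ 2)⁻¹
          ≤ 160 * q * 1 * (1 + (lam * x) ^ 2)⁻¹ := by
            apply mul_le_mul (mul_le_mul_of_nonneg_left hA (by positivity)) hB
              (by positivity) (by positivity)
        _ = χ x := by rw [hχ_def]; ring
    have hmono : (∫ x : ℝ, ‖∫ ρ : ℝ, Complex.exp (Complex.I * x * ρ) * g ρ‖) ≤ ∫ x, χ x :=
      integral_mono_of_nonneg (Filter.Eventually.of_forall fun x => norm_nonneg _) hχint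
        (Filter.Eventually.of_forall hle)
    have hχval : (∫ x, χ x) = 160 * π * s := by
      rw [hχ_def]
      rw [MeasureTheory.integral_const_mul]
      have := MeasureTheory.Measure.integral_comp_mul_left (fun y : ℝ => (1 + y ^ 2)⁻¹) lam
      rw [this, integral_univ_inv_one_add_sq, smul_eq_mul,
        abs_of_pos (inv_pos.2 hlam0), hlam_def, inv_div]
      field_simp
    refine hmono.trans ?_
    rw [hχval]
    nlinarith [Real.pi_le_four, Real.pi_pos, hs0]
end

section
/- There exists a constant c > 0 such that for all ξ, η ∈ ℝ³ and all choices of signs ε₁, ε₂ ∈ {+1, −1}: |⟨ξ⟩ − ε₁⟨ξ−η⟩ − ε₂⟨η⟩| ≥ c · (⟨ξ⟩ + ⟨η⟩)^{−1}. (One may take c = 1/8.) -/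
open Real

private lemma kg_sqrt_facts (x : ℝ) (hx : 0 ≤ x) :
    1 ≤ Real.sqrt (1 + x) ∧ Real.sqrt (1 + x) ^ 2 = 1 + x := by
  constructor
  · have h := Real.sq_sqrt (by linarith : (0:ℝ) ≤ 1 + x)
    nlinarith [Real.sqrt_nonneg (1 + x)]
  · exact Real.sq_sqrt (by linarith)

private lemma kg_tri {E : Type*} [NormedAddCommGroup E] [InnerProductSpace ℝ E] (u v : E) :
    Real.sqrt (1 + ‖u + v‖ ^ 2) + (Real.sqrt (1 + ‖u + v‖ ^ 2))⁻¹ ≤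
      Real.sqrt (1 + ‖u‖ ^ 2) + Real.sqrt (1 + ‖v‖ ^ 2) := by
  set P := Real.sqrt (1 + ‖u + v‖ ^ 2) with hPdef
  set Q := Real.sqrt (4 + ‖u + v‖ ^ 2) with hQdef
  set A := Real.sqrt (1 + ‖u‖ ^ 2) with hAdef
  set B := Real.sqrt (1 + ‖v‖ ^ 2) with hBdef
  obtain ⟨hP1, hP2⟩ := kg_sqrt_facts (‖u + v‖ ^ 2) (sq_nonneg _)
  obtain ⟨hA1, hA2⟩ := kg_sqrt_facts (‖u‖ ^ 2) (sq_nonneg _)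
  obtain ⟨hB1, hB2⟩ := kg_sqrt_facts (‖v‖ ^ 2) (sq_nonneg _)
  have hQ0 : 0 ≤ Q := Real.sqrt_nonneg _
  have hQ2 : Q ^ 2 = 4 + ‖u + v‖ ^ 2 := Real.sq_sqrt (by positivity)
  have hP0 : 0 < P := lt_of_lt_of_le one_pos hP1
  have hn : ‖u + v‖ ^ 2 = ‖u‖ ^ 2 + 2 * inner ℝ u v + ‖v‖ ^ 2 := by
    rw [@norm_add_sq_real]
  have hI : inner ℝ u v ≤ ‖u‖ * ‖v‖ := real_inner_le_norm u v
  -- A * B ≥ 1 + ‖u‖‖v‖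
  have hAB : 1 + ‖u‖ * ‖v‖ ≤ A * B := by
    nlinarith [sq_nonneg (‖u‖ - ‖v‖), mul_nonneg (norm_nonneg u) (norm_nonneg v),
      mul_pos (lt_of_lt_of_le one_pos hA1) (lt_of_lt_of_le one_pos hB1)]
  -- Q ≤ A + B
  have hQAB : Q ≤ A + B := by
    nlinarith [mul_pos (lt_of_lt_of_le one_pos hA1) (lt_of_lt_of_le one_pos hB1),
      mul_nonneg (norm_nonneg u) (norm_nonneg v)]
  -- P⁻¹ ≤ Q - P
  have hinv : P⁻¹ ≤ Q - P := by
    rw [inv_eq_one_div, div_le_iff₀ hP0]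
    nlinarith [mul_nonneg hQ0 hP0.le]
  linarith

/-- No time resonances for the quadratic Klein–Gordon phase:
there is `c > 0` (e.g. `c = 1/8`) so that for all `ξ, η ∈ ℝ³` and signs
`ε₁, ε₂ ∈ {±1}`, `|⟨ξ⟩ − ε₁⟨ξ−η⟩ − ε₂⟨η⟩| ≥ c(⟨ξ⟩+⟨η⟩)⁻¹`,
where `⟨x⟩ = √(1+|x|²)`. -/
theorem stmt_6 :
    ∃ c : ℝ, 0 < c ∧
      ∀ (ξ η : EuclideanSpace ℝ (Fin 3)) (ε₁ ε₂ : ℝ),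
        (ε₁ = 1 ∨ ε₁ = -1) → (ε₂ = 1 ∨ ε₂ = -1) →
        c * (Real.sqrt (1 + ‖ξ‖ ^ 2) + Real.sqrt (1 + ‖η‖ ^ 2))⁻¹ ≤
          |Real.sqrt (1 + ‖ξ‖ ^ 2) - ε₁ * Real.sqrt (1 + ‖ξ - η‖ ^ 2)
            - ε₂ * Real.sqrt (1 + ‖η‖ ^ 2)| := by
  refine ⟨1/8, by norm_num, fun ξ η ε₁ ε₂ h1 h2 => ?_⟩
  set A := Real.sqrt (1 + ‖ξ‖ ^ 2) with hAdef
  set B := Real.sqrt (1 + ‖ξ - η‖ ^ 2) with hBdef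
  set C := Real.sqrt (1 + ‖η‖ ^ 2) with hCdef
  obtain ⟨hA1, -⟩ := kg_sqrt_facts (‖ξ‖ ^ 2) (sq_nonneg _)
  obtain ⟨hB1, -⟩ := kg_sqrt_facts (‖ξ - η‖ ^ 2) (sq_nonneg _)
  obtain ⟨hC1, -⟩ := kg_sqrt_facts (‖η‖ ^ 2) (sq_nonneg _)
  have hA0 : (0:ℝ) < A := lt_of_lt_of_le one_pos hA1
  have hB0 : (0:ℝ) < B := lt_of_lt_of_le one_pos hB1
  have hC0 : (0:ℝ) < C := lt_of_lt_of_le one_pos hC1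
  have hAC0 : (0:ℝ) < A + C := by linarith
  -- three instances of the triangle-type inequality
  have e1 : A + A⁻¹ ≤ B + C := by
    have := kg_tri (ξ - η) η
    rwa [sub_add_cancel] at this
  have e2 : B + B⁻¹ ≤ A + C := by
    have := kg_tri ξ (-η)
    rwa [← sub_eq_add_neg, norm_neg] at this
  have e3 : C + C⁻¹ ≤ A + B := by
    have := kg_tri ξ (η - ξ)
    rwa [add_sub_cancel, norm_sub_rev η ξ] at this
  have hiA : (A + C)⁻¹ ≤ A⁻¹ := inv_anti₀ hA0 (by linarith)
  have hiC : (A + C)⁻¹ ≤ C⁻¹ := inv_anti₀ hC0 (by linarith)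
  have hiB : (A + C)⁻¹ ≤ B⁻¹ := by
    have hBle : B ≤ A + C := by
      have : 0 < B⁻¹ := inv_pos.mpr hB0
      linarith
    exact inv_anti₀ hB0 hBle
  have hkey : (A + C)⁻¹ ≤ |A - ε₁ * B - ε₂ * C| := by
    rcases h1 with rfl | rfl <;> rcases h2 with rfl | rfl
    · -- (+,+): B + C - A ≥ A⁻¹
      refine le_abs.mpr (Or.inr ?_)
      have : 0 < A⁻¹ := inv_pos.mpr hA0
      linarith
    · -- (+,-): A - B + C ≥ B⁻¹
      refine le_abs.mpr (Or.inl ?_)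
      linarith
    · -- (-,+): A + B - C ≥ C⁻¹
      refine le_abs.mpr (Or.inl ?_)
      linarith
    · -- (-,-): A + B + C ≥ 3 ≥ (A+C)⁻¹
      refine le_abs.mpr (Or.inl ?_)
      have : (A + C)⁻¹ ≤ 1 := inv_le_one_of_one_le₀ (by linarith)
      linarith
  have hpos : (0:ℝ) < (A + C)⁻¹ := inv_pos.mpr hAC0
  nlinarith [hkey, hpos]
end
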